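/- (Moser–Tardos.) Let Π = (V, Λ, C, dom, Bad) be a CSP and P a probability measure on Λ making (Λ, P) a standard probability space, such that each Bad(c) is P^{dom(c)}-measurable with P[Bad(c)] ≤ p, the maximum degree of the dependency graph D_Π is at most d, and e·p·(d+1) < 1, for some p ∈ [0,1) and d ∈ ℕ. Sample a random table t : V → Λ^ℕ from the product probability space (Λ^{V×ℕ}, P^{V×ℕ}). Then for each v ∈ V, the probability that every f ∈ MTA(Π, t) is defined on v equals 1. -/

import Mathlib

open MeasureTheory Set
open scoped ENNReal

/-- A constraint satisfaction problem (CSP): variables `V`, labels `Λ`, constraints `C`.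
`dom c` is the finite set of variables of the constraint `c`, and `Bad c` is the set of
bad labelings `φ : dom c → Λ`. -/
structure CSP (V : Type*) (Λ : Type*) (C : Type*) where
  dom : C → Set V
  dom_finite : ∀ c, (dom c).Finite
  Bad : (c : C) → Set (↥(dom c) → Λ)

namespace CSP

variable {V Λ C : Type*}

/-- A labeling `f : V → Λ` violates the constraint `c` if its restriction to `dom c`
is a bad labeling. -/
def violates (Φ : CSP V Λ C) (f : V → Λ) (c : C) : Prop :=
  (fun v : ↥(Φ.dom c) => f v) ∈ Φ.Bad c

/-- A solution of a CSP: a labeling satisfying every constraint. -/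
def IsSolution (Φ : CSP V Λ C) (f : V → Λ) : Prop := ∀ c, ¬ Φ.violates f c

/-- The dependency graph of a CSP: distinct constraints are adjacent iff their domains meet. -/
def depGraph (Φ : CSP V Λ C) : SimpleGraph C where
  Adj c c' := c ≠ c' ∧ (Φ.dom c ∩ Φ.dom c').Nonempty
  symm := by
    constructor
    intro c c' h
    exact ⟨h.1.symm, by rw [Set.inter_comm]; exact h.2⟩
  loopless := ⟨fun c h => h.1 rfl⟩

/-- `P[Bad(c)]`: the probability of the set of bad labelings of `c` with respect to the
product measure `P^{dom c}`. -/
noncomputable def badProb [MeasurableSpace Λ] (Φ : CSP V Λ C) (P : Measure Λ) (c : C) : ℝ≥0∞ :=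
  haveI := (Φ.dom_finite c).fintype
  Measure.pi (fun _ : ↥(Φ.dom c) => P) (Φ.Bad c)

end CSP

/-- The ball of radius `R` around `c`: vertices joined to `c` by a path of at most `R` edges. -/
def gball {C : Type*} (G : SimpleGraph C) (c : C) : ℕ → Set C
  | 0 => {c}
  | R + 1 => gball G c R ∪ ⋃ x ∈ gball G c R, G.neighborSet x

lemma gball_finite {C : Type*} (G : SimpleGraph C)
    (hlf : ∀ v, (G.neighborSet v).Finite) (c : C) : ∀ R, (gball G c R).Finite
  | 0 => Set.finite_singleton c
  | (R + 1) => ((gball_finite G hlf c R).union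
      ((gball_finite G hlf c R).biUnion (fun x _ => hlf x)))

/-- The growth function `γ_G(R) = sup_v |B_G(v,R)|`, valued in `ℕ∞`. -/
noncomputable def growth {C : Type*} (G : SimpleGraph C) (R : ℕ) : ℕ∞ :=
  ⨆ v, (gball G v R).encard

/-- The exponential growth rate `egr(G) = inf_{R ≥ 1} γ_G(R)^{1/R}`, valued in `ℝ≥0∞`. -/
noncomputable def egr {C : Type*} (G : SimpleGraph C) : ℝ≥0∞ :=
  ⨅ R : {n : ℕ // 1 ≤ n}, ((growth G R.1 : ℝ≥0∞) ^ ((R.1 : ℝ)⁻¹))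

/-- The closed neighborhood `N[c]` of a vertex in a graph. -/
def closedNbhd {C : Type*} (G : SimpleGraph C) (c : C) : Set C :=
  insert c (G.neighborSet c)

/-- A set of vertices is independent if no two of its members are adjacent. -/
def IsIndep {C : Type*} (G : SimpleGraph C) (s : Set C) : Prop :=
  ∀ c ∈ s, ∀ c' ∈ s, ¬ G.Adj c c'

section BorelCSP

variable {V Λ C : Type*}

/-- The finite set obtained as the image of a tuple. -/
noncomputable def finsetOfTuple {X : Type*} (n : ℕ) (t : Fin n → X) : Finset X :=
  haveI := Classical.decEq X
  Finset.image t Finset.univ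

/-- The standard Borel structure on the space of finite subsets of `X`: a set of finite sets is
measurable iff for each `n` its preimage under the map `(x_1, …, x_n) ↦ {x_1, …, x_n}` is
measurable. -/
noncomputable def finsetMS (X : Type*) [MeasurableSpace X] : MeasurableSpace (Finset X) :=
  ⨅ n : ℕ, MeasurableSpace.map (finsetOfTuple (X := X) n) MeasurableSpace.pi

/-- The graph of a labeling `φ : dom c → Λ`, as a finite subset of `V × Λ`; this encodes a finite
partial function `V ⇀ Λ`. -/
noncomputable def CSP.graphOf (Φ : CSP V Λ C) (c : C) (φ : ↥(Φ.dom c) → Λ) :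
    Finset (V × Λ) :=
  haveI := Classical.decEq (V × Λ)
  (Φ.dom_finite c).toFinset.attach.image
    (fun v => (v.1, φ ⟨v.1, (Φ.dom_finite c).mem_toFinset.mp v.2⟩))

/-- A CSP on standard Borel spaces is Borel if `dom` is a Borel map into the space of finite
subsets of `V` and `{(c, φ) : φ ∈ Bad c}` is Borel in `C × (finite partial functions V ⇀ Λ)`,
finite partial functions being encoded by their graphs. -/
structure IsBorelCSP [MeasurableSpace V] [MeasurableSpace Λ] [MeasurableSpace C]
    (Φ : CSP V Λ C) : Prop where
  dom_meas : Measurable[_, finsetMS V] (fun c => (Φ.dom_finite c).toFinset)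
  bad_meas : MeasurableSet[(inferInstance : MeasurableSpace C).prod (finsetMS (V × Λ))]
    {p : C × Finset (V × Λ) | ∃ φ ∈ Φ.Bad p.1, p.2 = Φ.graphOf p.1 φ}

end BorelCSP

section MT

variable {V Λ C : Type*}

open scoped Classical

/-- The level function of the Moser–Tardos algorithm run with the sequence `I` of chosen
independent sets: `lev_0(v) = 0` and `lev_{n+1}(v) = lev_n(v) + 1` exactly when `v` belongs to the
domain of some constraint in `I n`. -/
noncomputable def MTlev (Φ : CSP V Λ C) (I : ℕ → Set C) : ℕ → V → ℕ
  | 0, _ => 0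
  | n + 1, v => MTlev Φ I n v + (if ∃ c ∈ I n, v ∈ Φ.dom c then 1 else 0)

/-- The labeling used at step `n` of the Moser–Tardos algorithm with table `t`. -/
noncomputable def CSP.MTstep (Φ : CSP V Λ C) (t : V → ℕ → Λ) (I : ℕ → Set C)
    (n : ℕ) : V → Λ :=
  fun v => t v (MTlev Φ I n v)

/-- An MT-sequence `I` is consistent with `(Φ, t)` if it can be produced by the Moser–Tardos
algorithm on input `(Φ, t)`: each `I n` is an independent set of constraints violated by the
current labeling. -/
noncomputable def CSP.Consistent (Φ : CSP V Λ C) (t : V → ℕ → Λ) (I : ℕ → Set C) : Prop :=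
  (∀ n, IsIndep Φ.depGraph (I n)) ∧ ∀ n, ∀ c ∈ I n, Φ.violates (Φ.MTstep t I n) c

/-- An MT-sequence consistent with `(Φ, t)` that can be produced by the *maximal* Moser–Tardos
algorithm: each `I n` is a maximal independent subset of the set of violated constraints. -/
noncomputable def CSP.MaximalCons (Φ : CSP V Λ C) (t : V → ℕ → Λ) (I : ℕ → Set C) : Prop :=
  Φ.Consistent t I ∧
    ∀ n, ∀ c, Φ.violates (Φ.MTstep t I n) c → c ∉ I n → ∃ c' ∈ I n, Φ.depGraph.Adj c c'

/-- The levels at `v` stabilize, i.e. `lev(v) = lim_n lev_n(v) < ∞`: the output labeling of the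
run of the Moser–Tardos algorithm is defined at `v`. -/
def StabilizesAt (Φ : CSP V Λ C) (I : ℕ → Set C) (v : V) : Prop :=
  ∃ N, ∀ n, N ≤ n → MTlev Φ I n v = MTlev Φ I N v

/-- A table is good if every run of the Moser–Tardos algorithm on `(Φ, t)` produces a labeling
defined on all of `V`. -/
def CSP.GoodTable (Φ : CSP V Λ C) (t : V → ℕ → Λ) : Prop :=
  ∀ I : ℕ → Set C, Φ.Consistent t I → ∀ v, StabilizesAt Φ I v

/-- The `(c, r)`-local CSP `Π_{c,r}`: constraints at distance more than `r` from `c` in the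
dependency graph are always violated. -/
noncomputable def CSP.localCSP (Φ : CSP V Λ C) (c : C) (r : ℕ) : CSP V Λ C where
  dom := Φ.dom
  dom_finite := Φ.dom_finite
  Bad a := if a ∈ gball Φ.depGraph c r then Φ.Bad a else Set.univ

/-- A finite MT-sequence: `Σ_n |I_n| < ∞`. -/
def FiniteMTSeq {C : Type*} (I : ℕ → Set C) : Prop :=
  {q : C × ℕ | q.1 ∈ I q.2}.Finite

/-- A finite MT-sequence is `(c, r, N, ε)`-Følner if `Σ_n |I_n ∩ B_D(c,r)| ≥ N` and
`Σ_n |I_n \ B_D(c,r)| < ε · Σ_n |I_n|`. -/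
def CSP.Folner (Φ : CSP V Λ C) (I : ℕ → Set C) (c : C) (r N : ℕ) (ε : ℝ) : Prop :=
  FiniteMTSeq I ∧
    N ≤ {q : C × ℕ | q.1 ∈ I q.2 ∧ q.1 ∈ gball Φ.depGraph c r}.ncard ∧
    ({q : C × ℕ | q.1 ∈ I q.2 ∧ q.1 ∉ gball Φ.depGraph c r}.ncard : ℝ) <
      ε * ({q : C × ℕ | q.1 ∈ I q.2}.ncard : ℝ)

/-- A table is `(c, R, N, ε)`-locally good if for all `r < R` there is no `(c, r, N, ε)`-Følner
MT-sequence consistent with `(Φ_{c,r}, t)`. -/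
noncomputable def CSP.LocallyGoodAt (Φ : CSP V Λ C) (t : V → ℕ → Λ) (c : C) (R N : ℕ)
    (ε : ℝ) : Prop :=
  ∀ r < R, ¬ ∃ I : ℕ → Set C, (Φ.localCSP c r).Consistent t I ∧ Φ.Folner I c r N ε

/-- A table is `(R, N, ε)`-locally good if it is `(c, R, N, ε)`-locally good for every `c`. -/
noncomputable def CSP.LocallyGood (Φ : CSP V Λ C) (t : V → ℕ → Λ) (R N : ℕ) (ε : ℝ) : Prop :=
  ∀ c, Φ.LocallyGoodAt t c R N ε

/-- `dom_R(c) = ⋃_{a ∈ B_D(c,R)} dom(a)`. -/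
def CSP.domR (Φ : CSP V Λ C) (c : C) (R : ℕ) : Set V :=
  ⋃ a ∈ gball Φ.depGraph c R, Φ.dom a

lemma CSP.domR_finite (Φ : CSP V Λ C) (hlf : ∀ c, (Φ.depGraph.neighborSet c).Finite)
    (c : C) (R : ℕ) : (Φ.domR c R).Finite :=
  (gball_finite _ hlf c R).biUnion (fun a _ => Φ.dom_finite a)

/-- The set `LBad_{R,N,ε}(c)` of partial tables `φ : dom_R(c) → Λ^ℕ` such that some
(equivalently, every) table extending `φ` is not `(c, R, N, ε)`-locally good. -/
noncomputable def CSP.LBad (Φ : CSP V Λ C) (c : C) (R N : ℕ) (ε : ℝ) :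
    Set (↥(Φ.domR c R) → ℕ → Λ) :=
  {φ | ∃ t : V → ℕ → Λ, (∀ v : ↥(Φ.domR c R), t v = φ v) ∧
    ¬ Φ.LocallyGoodAt t c R N ε}

/-- The CSP `LG(R, N, ε)` whose solutions are exactly the `(R, N, ε)`-locally good tables. -/
noncomputable def CSP.LG (Φ : CSP V Λ C) (R N : ℕ) (ε : ℝ)
    (h : ∀ c, (Φ.domR c R).Finite) : CSP V (ℕ → Λ) C where
  dom c := Φ.domR c R
  dom_finite := h
  Bad c := Φ.LBad c R N ε

end MT

/-- `Q` is the product of copies of `P` over the index set `ι`: the measure of every measurable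
cylinder is the corresponding finite product. -/
def IsProductOf {ι Λ : Type*} [MeasurableSpace Λ] (Q : Measure (ι → Λ)) (P : Measure Λ) : Prop :=
  ∀ (s : Finset ι) (A : ι → Set Λ), (∀ i ∈ s, MeasurableSet (A i)) →
    Q {g | ∀ i ∈ s, g i ∈ A i} = ∏ i ∈ s, P (A i)

/-! ### New development -/

section MTdev

open scoped Classical

variable {V Λ C : Type*}

namespace MTdev

lemma gball_succ_mono {C : Type*} (G : SimpleGraph C) (c : C) (R : ℕ) :
    gball G c R ⊆ gball G c (R + 1) := by
  intro x hx; exact Or.inl hx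

lemma gball_mono {C : Type*} (G : SimpleGraph C) (c : C) {R R' : ℕ} (h : R ≤ R') :
    gball G c R ⊆ gball G c R' := by
  induction h with
  | refl => exact subset_rfl
  | step _ ih => exact fun x hx => gball_succ_mono G c _ (ih hx)

variable (Φ : CSP V Λ C)

/-- equal or adjacent in the dependency graph -/
def adjE (c c' : C) : Prop := c = c' ∨ Φ.depGraph.Adj c c'

lemma adjE_refl (c : C) : adjE Φ c c := Or.inl rfl

lemma adjE_symm {c c' : C} (h : adjE Φ c c') : adjE Φ c' c := by
  rcases h with h | h
  · exact Or.inl h.symm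
  · exact Or.inr h.symm

lemma adjE_of_shared {u : V} {c c' : C} (hc : u ∈ Φ.dom c) (hc' : u ∈ Φ.dom c') :
    adjE Φ c c' := by
  by_cases h : c = c'
  · exact Or.inl h
  · exact Or.inr (show c ≠ c' ∧ (Φ.dom c ∩ Φ.dom c').Nonempty from ⟨h, ⟨u, hc, hc'⟩⟩)

lemma dom_disjoint_of_not_adjE {u : V} {c c' : C} (h : ¬ adjE Φ c c')
    (hc : u ∈ Φ.dom c) (hc' : u ∈ Φ.dom c') : False :=
  h (adjE_of_shared Φ hc hc')

lemma gball_adjE {G : SimpleGraph C} {c c' c₀ : C} {R : ℕ}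
    (hG : G = Φ.depGraph)
    (hc' : c' ∈ gball G c₀ R) (h : adjE Φ c c') : c ∈ gball G c₀ (R + 1) := by
  rcases h with rfl | h
  · exact Or.inl hc'
  · exact Or.inr (Set.mem_biUnion hc' (by rw [hG]; exact h.symm))

/-- A proper witness structure (layered set) with root label `c₀`. -/
def ProperWS (c₀ : C) (T : Finset (ℕ × C)) : Prop :=
  (0, c₀) ∈ T ∧ (∀ c, (0, c) ∈ T → c = c₀) ∧
  (∀ e c, (e + 1, c) ∈ T → ∃ c', (e, c') ∈ T ∧ adjE Φ c' c) ∧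
  (∀ e c c', (e, c) ∈ T → (e, c') ∈ T → c ≠ c' → ¬ Φ.depGraph.Adj c c')

/-- the slot index used by the node at depth `e` for variable `u`. -/
noncomputable def κf (T : Finset (ℕ × C)) (e : ℕ) (u : V) : ℕ :=
  (T.filter (fun y => e < y.1 ∧ u ∈ Φ.dom y.2)).card

/-- The event that the witness structure `T` "occurs" in the table `t`. -/
def EvOne (T : Finset (ℕ × C)) (y : ℕ × C) : Set ((V × ℕ) → Λ) :=
  {t | (fun u : ↥(Φ.dom y.2) => t (u.1, κf Φ T y.1 u.1)) ∈ Φ.Bad y.2}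

def Ev (T : Finset (ℕ × C)) : Set ((V × ℕ) → Λ) := ⋂ y ∈ T, EvOne Φ T y

/-- the set of table entries ("slots") used by node `y` of `T`. -/
noncomputable def slotF (T : Finset (ℕ × C)) (y : ℕ × C) : Finset (V × ℕ) :=
  haveI := (Φ.dom_finite y.2).fintype
  Finset.univ.image (fun u : ↥(Φ.dom y.2) => ((u : V), κf Φ T y.1 (u : V)))

lemma κf_lt {T : Finset (ℕ × C)} {e e' : ℕ} {c' : C} {u : V}
    (hy' : (e', c') ∈ T) (hu : u ∈ Φ.dom c') (he : e < e') :
    κf Φ T e' u < κf Φ T e u := by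
  apply Finset.card_lt_card
  constructor
  · intro y hy
    rw [Finset.mem_filter] at hy ⊢
    exact ⟨hy.1, lt_trans he hy.2.1, hy.2.2⟩
  · intro hsub
    have : (e', c') ∈ T.filter (fun y => e < y.1 ∧ u ∈ Φ.dom y.2) :=
      Finset.mem_filter.2 ⟨hy', he, hu⟩
    have h2 := hsub this
    have := (Finset.mem_filter.1 h2).2.1
    exact lt_irrefl e' this

lemma slot_disjoint {c₀ : C} {T : Finset (ℕ × C)} (hP : ProperWS Φ c₀ T)
    {y y' : ℕ × C} (hy : y ∈ T) (hy' : y' ∈ T) (hne : y ≠ y') :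
    Disjoint (slotF Φ T y) (slotF Φ T y') := by
  classical
  rw [Finset.disjoint_left]
  rintro i hi hi'
  simp only [slotF, Finset.mem_image] at hi hi'
  obtain ⟨u, -, rfl⟩ := hi
  obtain ⟨u', -, hu'⟩ := hi'
  have huv : (u' : V) = (u : V) := congrArg Prod.fst hu'
  have hκ : κf Φ T y'.1 (u : V) = κf Φ T y.1 (u : V) := by
    have := congrArg Prod.snd hu'; rw [huv] at this; exact this
  have hu'd : (u : V) ∈ Φ.dom y'.2 := by rw [← huv]; exact u'.2
  have hud : (u : V) ∈ Φ.dom y.2 := u.2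
  rcases lt_trichotomy y.1 y'.1 with h | h | h
  · exact absurd hκ (ne_of_lt (κf_lt Φ (by simpa using hy') hu'd h))
  · -- same depth, distinct labels
    have hlab : y.2 ≠ y'.2 := by
      intro hl; exact hne (Prod.ext h hl)
    have := hP.2.2.2 y.1 y.2 y'.2 (by simpa using hy)
      (by have : (y.1, y'.2) = y' := Prod.ext h rfl; rw [this]; exact hy') hlab
    exact this (show y.2 ≠ y'.2 ∧ (Φ.dom y.2 ∩ Φ.dom y'.2).Nonempty from ⟨hlab, ⟨(u : V), hud, hu'd⟩⟩)
  · exact absurd hκ.symm (ne_of_lt (κf_lt Φ (by simpa using hy) hud h))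

/-- Depth levels of a proper witness structure are contiguous; each depth is below the card. -/
lemma depth_lt_card {c₀ : C} {T : Finset (ℕ × C)} (hP : ProperWS Φ c₀ T) :
    ∀ y ∈ T, y.1 < T.card := by
  have hdown : ∀ e, ∀ c, (e, c) ∈ T → ∀ d ≤ e, ∃ c', (d, c') ∈ T := by
    intro e
    induction e with
    | zero => intro c hc d hd; interval_cases d; exact ⟨c, hc⟩
    | succ n ih =>
      intro c hc d hd
      rcases Nat.eq_or_lt_of_le hd with rfl | hlt
      · exact ⟨c, hc⟩
      · obtain ⟨c', hc', -⟩ := hP.2.2.1 n c hc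
        exact ih c' hc' d (Nat.lt_succ_iff.1 hlt)
  rintro ⟨e, c⟩ hy
  have hsub : Finset.range (e + 1) ⊆ T.image Prod.fst := by
    intro d hd
    obtain ⟨c', hc'⟩ := hdown e c hy d (Nat.lt_succ_iff.1 (Finset.mem_range.1 hd))
    exact Finset.mem_image.2 ⟨(d, c'), hc', rfl⟩
  have := (Finset.card_le_card hsub).trans (Finset.card_image_le)
  simpa using this

/-- The finite set of candidate witness structures with root `c₀` and cardinality `k`. -/
noncomputable def TT (hlf : ∀ c, (Φ.depGraph.neighborSet c).Finite) (c₀ : C) (k : ℕ) :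
    Finset (Finset (ℕ × C)) :=
  ((Finset.range k ×ˢ (gball_finite Φ.depGraph hlf c₀ k).toFinset).powerset).filter
    (fun T => ProperWS Φ c₀ T ∧ T.card = k)

lemma label_mem_gball {c₀ : C} {T : Finset (ℕ × C)} (hP : ProperWS Φ c₀ T) :
    ∀ y ∈ T, y.2 ∈ gball Φ.depGraph c₀ y.1 := by
  have : ∀ e c, (e, c) ∈ T → c ∈ gball Φ.depGraph c₀ e := by
    intro e
    induction e with
    | zero => intro c hc; have := hP.2.1 c hc; rw [this]; exact rfl
    | succ n ih =>
      intro c hc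
      obtain ⟨c', hc', hadj⟩ := hP.2.2.1 n c hc
      exact gball_adjE Φ rfl (ih c' hc') (adjE_symm Φ hadj)
  exact fun y hy => this y.1 y.2 (by simpa using hy)

lemma mem_TT (hlf : ∀ c, (Φ.depGraph.neighborSet c).Finite) {c₀ : C} {T : Finset (ℕ × C)}
    (hP : ProperWS Φ c₀ T) : T ∈ TT Φ hlf c₀ T.card := by
  refine Finset.mem_filter.2 ⟨Finset.mem_powerset.2 ?_, hP, rfl⟩
  rintro ⟨e, c⟩ hy
  refine Finset.mem_product.2 ⟨Finset.mem_range.2 (depth_lt_card Φ hP _ hy), ?_⟩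
  rw [Set.Finite.mem_toFinset]
  exact gball_mono _ _ (le_of_lt (depth_lt_card Φ hP _ hy)) (label_mem_gball Φ hP _ hy)

end MTdev
end MTdev

section MTdev2
open scoped Classical
variable {V Λ C : Type*}
namespace MTdev
variable (Φ : CSP V Λ C)

/-! ### Probability estimates -/

section Prob

variable [MeasurableSpace Λ] (P : Measure Λ) (Q : Measure ((V × ℕ) → Λ))

lemma isProb_of_isProductOf [IsProbabilityMeasure P] (hQ : IsProductOf Q P) :
    IsProbabilityMeasure Q := by
  constructor
  have := hQ ∅ (fun _ => Set.univ) (by simp)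
  simpa using this

lemma iIndepFun_of_isProductOf [IsProbabilityMeasure P] (hQ : IsProductOf Q P) :
    ProbabilityTheory.iIndepFun
      (fun i (t : (V × ℕ) → Λ) => t i) Q := by
  haveI := isProb_of_isProductOf P Q hQ
  rw [ProbabilityTheory.iIndepFun_iff_measure_inter_preimage_eq_mul]
  intro S sets hsets
  have h1 : (⋂ i ∈ S, (fun t : (V × ℕ) → Λ => t i) ⁻¹' sets i) =
      {g : (V × ℕ) → Λ | ∀ i ∈ S, g i ∈ sets i} := by
    ext t; simp
  have h2 : ∀ i ∈ S, Q ((fun t : (V × ℕ) → Λ => t i) ⁻¹' sets i) = P (sets i) := by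
    intro i hi
    have hm : ∀ j ∈ ({i} : Finset (V × ℕ)), MeasurableSet (sets j) := by
      intro j hj
      rw [Finset.mem_singleton] at hj
      exact hj ▸ hsets i hi
    have := hQ {i} sets hm
    simp only [Finset.mem_singleton, Finset.prod_singleton] at this
    rw [← this]
    congr 1
    ext t; simp
  rw [h1, hQ S sets hsets]
  exact (Finset.prod_congr rfl h2).symm

/-- restriction of tables to the slots in `S`. -/
def ρ (S : Finset (V × ℕ)) : ((V × ℕ) → Λ) → (↥S → Λ) := fun t i => t i

lemma ρ_measurable (S : Finset (V × ℕ)) : Measurable (ρ (Λ := Λ) S) :=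
  measurable_pi_lambda _ (fun i => measurable_pi_apply _)

/-- Events depending on pairwise disjoint finite sets of coordinates multiply. -/
lemma indep_blocks [IsProbabilityMeasure P] (hQ : IsProductOf Q P)
    {ι : Type*} (U : Finset ι) (S : ι → Finset (V × ℕ)) (B : (i : ι) → Set (↥(S i) → Λ))
    (hB : ∀ i, MeasurableSet (B i))
    (hdisj : ∀ i ∈ U, ∀ j ∈ U, i ≠ j → Disjoint (S i) (S j)) :
    Q (⋂ i ∈ U, ρ (S i) ⁻¹' B i) = ∏ i ∈ U, Q (ρ (S i) ⁻¹' B i) := by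
  haveI := isProb_of_isProductOf P Q hQ
  have hind := iIndepFun_of_isProductOf P Q hQ
  classical
  induction U using Finset.induction with
  | empty => simp
  | insert a U' hnotmem ih =>
    have hdisj' : ∀ i ∈ U', ∀ j ∈ U', i ≠ j → Disjoint (S i) (S j) := by
      intro i hi j hj hij
      exact hdisj i (Finset.mem_insert_of_mem hi) j (Finset.mem_insert_of_mem hj) hij
    rw [Finset.set_biInter_insert, Finset.prod_insert hnotmem, ← ih hdisj']
    -- express the rest as a block event on the union of slots
    set SU : Finset (V × ℕ) := U'.biUnion S with hSU
    have hsub : ∀ i ∈ U', S i ⊆ SU := fun i hi => Finset.subset_biUnion_of_mem S hi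
    set rr : (i : ι) → i ∈ U' → (↥SU → Λ) → (↥(S i) → Λ) :=
      fun i hi h j => h ⟨j.1, hsub i hi j.2⟩ with hrr
    have hrrm : ∀ i hi, Measurable (rr i hi) :=
      fun i hi => measurable_pi_lambda _ (fun j => measurable_pi_apply _)
    set B' : Set (↥SU → Λ) := ⋂ (i : ↥U'), rr i.1 i.2 ⁻¹' B i.1 with hB'
    have hB'm : MeasurableSet B' :=
      MeasurableSet.iInter (fun i => (hrrm i.1 i.2) (hB i.1))
    have hrest : (⋂ i ∈ U', ρ (S i) ⁻¹' B i) = ρ SU ⁻¹' B' := by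
      ext t
      simp only [Set.mem_iInter, Set.mem_preimage, hB']
      constructor
      · intro h i
        exact h i.1 i.2
      · intro h i hi
        exact h ⟨i, hi⟩
    rw [hrest]
    have hd : Disjoint (S a) SU := by
      rw [hSU, Finset.disjoint_biUnion_right]
      intro i hi
      exact hdisj a (Finset.mem_insert_self a U') i (Finset.mem_insert_of_mem hi)
        (fun h => hnotmem (h ▸ hi))
    have hIF := hind.indepFun_finset (S a) SU hd (fun i => measurable_pi_apply _)
    exact hIF.measure_inter_preimage_eq_mul _ _ (hB a) hB'm

lemma mem_slotF {T : Finset (ℕ × C)} {y : ℕ × C} (u : ↥(Φ.dom y.2)) :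
    ((u : V), κf Φ T y.1 (u : V)) ∈ slotF Φ T y := by
  letI := (Φ.dom_finite y.2).fintype
  simp only [slotF, Finset.mem_image]
  exact ⟨u, Finset.mem_univ u, rfl⟩

lemma Q_EvOne_eq [IsProbabilityMeasure P] (hQ : IsProductOf Q P)
    (T : Finset (ℕ × C)) (y : ℕ × C) (hmeas : MeasurableSet (Φ.Bad y.2)) :
    Q (EvOne Φ T y) = Φ.badProb P y.2 := by
  letI := (Φ.dom_finite y.2).fintype
  haveI := isProb_of_isProductOf P Q hQ
  let c : C := y.2
  let κv : V → ℕ := fun u => κf Φ T y.1 u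
  set g : ((V × ℕ) → Λ) → (↥(Φ.dom c) → Λ) := fun t u => t ((u : V), κv (u : V)) with hg
  have hgm : Measurable g := measurable_pi_lambda _ (fun u => measurable_pi_apply _)
  have hmap : Measure.pi (fun _ : ↥(Φ.dom c) => P) = Q.map g := by
    apply Measure.pi_eq
    intro s hs
    rw [Measure.map_apply hgm (MeasurableSet.univ_pi hs)]
    set sl : ↥(Φ.dom c) → V × ℕ := fun u => ((u : V), κv (u : V)) with hsl
    have hslot_inj : Function.Injective sl := by
      intro a b hab
      exact Subtype.ext (congrArg Prod.fst hab)
    set SF : Finset (V × ℕ) := Finset.univ.image sl with hSF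
    set A : V × ℕ → Set Λ := fun i => ⋂ (u : ↥(Φ.dom c)) (_ : sl u = i), s u with hA
    have hAval : ∀ u : ↥(Φ.dom c), A (sl u) = s u := by
      intro u
      apply Set.Subset.antisymm
      · intro xx hx
        exact Set.mem_iInter₂.1 hx u rfl
      · intro xx hx
        apply Set.mem_iInter₂.2
        intro u' hu'
        have : u' = u := hslot_inj hu'
        rw [this]
        exact hx
    have hset : g ⁻¹' (Set.pi Set.univ s) = {t : (V × ℕ) → Λ | ∀ i ∈ SF, t i ∈ A i} := by
      ext t
      simp only [Set.mem_preimage, Set.mem_pi, Set.mem_univ, forall_true_left, Set.mem_setOf_eq]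
      constructor
      · intro h i hi
        obtain ⟨u, -, rfl⟩ := Finset.mem_image.1 hi
        rw [hAval u]
        exact h u
      · intro h u
        have hmem : sl u ∈ SF := Finset.mem_image.2 ⟨u, Finset.mem_univ u, rfl⟩
        have := h (sl u) hmem
        rw [hAval u] at this
        exact this
    have hAm : ∀ i ∈ SF, MeasurableSet (A i) := by
      intro i hi
      obtain ⟨u, -, rfl⟩ := Finset.mem_image.1 hi
      rw [hAval u]
      exact hs u
    rw [hset, hQ SF A hAm, hSF, Finset.prod_image (fun a _ b _ h => hslot_inj h)]
    exact Finset.prod_congr rfl (fun u _ => by rw [hAval u])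
  have hEv : EvOne Φ T y = g ⁻¹' (Φ.Bad c) := rfl
  rw [hEv, ← Measure.map_apply hgm hmeas, ← hmap]
  rfl

lemma Q_Ev_le [IsProbabilityMeasure P] (hQ : IsProductOf Q P)
    (hmeas : ∀ c, MeasurableSet (Φ.Bad c)) {p : ℝ}
    (hbad : ∀ c, Φ.badProb P c ≤ ENNReal.ofReal p)
    {c₀ : C} {T : Finset (ℕ × C)} (hP : ProperWS Φ c₀ T) :
    Q (Ev Φ T) ≤ ENNReal.ofReal p ^ T.card := by
  haveI := isProb_of_isProductOf P Q hQ
  classical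
  set B : (y : ℕ × C) → Set (↥(slotF Φ T y) → Λ) :=
    fun y => (fun h (u : ↥(Φ.dom y.2)) =>
      h ⟨((u : V), κf Φ T y.1 (u : V)), mem_slotF Φ u⟩) ⁻¹' (Φ.Bad y.2) with hB
  have hBm : ∀ y, MeasurableSet (B y) := fun y =>
    (measurable_pi_lambda _ (fun u => measurable_pi_apply _)) (hmeas y.2)
  have hEvOne : ∀ y, EvOne Φ T y = ρ (slotF Φ T y) ⁻¹' B y := fun y => rfl
  have hprod := indep_blocks P Q hQ T (fun y => slotF Φ T y) B hBm
    (fun i hi j hj hij => slot_disjoint Φ hP hi hj hij)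
  have hEv : Ev Φ T = ⋂ y ∈ T, ρ (slotF Φ T y) ⁻¹' B y := by
    rw [Ev]
    exact Set.iInter₂_congr (fun y _ => hEvOne y)
  rw [hEv, hprod]
  calc ∏ y ∈ T, Q (ρ (slotF Φ T y) ⁻¹' B y) ≤ ∏ _y ∈ T, ENNReal.ofReal p := by
        apply Finset.prod_le_prod'
        intro y hy
        rw [← hEvOne y, Q_EvOne_eq Φ P Q hQ T y (hmeas y.2)]
        exact hbad y.2
    _ = ENNReal.ofReal p ^ T.card := Finset.prod_const _

lemma Ev_measurable (hmeas : ∀ c, MeasurableSet (Φ.Bad c)) (T : Finset (ℕ × C)) :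
    MeasurableSet (Ev Φ T) := by
  apply Set.Finite.measurableSet_biInter (Finset.finite_toSet T)
  intro y _
  exact (measurable_pi_lambda _ (fun u => measurable_pi_apply _)) (hmeas y.2)

end Prob

end MTdev
end MTdev2



section MTdev3
open scoped Classical
variable {V Λ C : Type*}
namespace MTdev
variable (Φ : CSP V Λ C)

lemma MTlev_mono (I : ℕ → Set C) (u : V) : Monotone (fun n => MTlev Φ I n u) := by
  apply monotone_nat_of_le_succ
  intro n
  show MTlev Φ I n u ≤ MTlev Φ I n u + _
  exact Nat.le_add_right _ _

lemma MTlev_count (I : ℕ → Set C) (u : V) (n : ℕ) :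
    MTlev Φ I n u = ((Finset.range n).filter (fun m => ∃ c ∈ I m, u ∈ Φ.dom c)).card := by
  induction n with
  | zero => simp [MTlev]
  | succ n ih =>
    by_cases h : ∃ c ∈ I n, u ∈ Φ.dom c
    · simp [MTlev, h, ih, Finset.range_add_one, Finset.filter_insert,
        Finset.card_insert_of_notMem (fun hc => (Finset.mem_range.1 (Finset.mem_filter.1 hc).1).false)]
    · simp [MTlev, h, ih, Finset.range_add_one, Finset.filter_insert]

lemma MTlev_unbounded (I : ℕ → Set C) (v : V) (hns : ¬ StabilizesAt Φ I v) :
    ∀ M, ∃ n, M ≤ MTlev Φ I n v := by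
  intro M
  induction M with
  | zero => exact ⟨0, Nat.zero_le _⟩
  | succ M ih =>
    obtain ⟨n, hn⟩ := ih
    rw [StabilizesAt] at hns
    push_neg at hns
    obtain ⟨n', hn', hne⟩ := hns n
    have hmono := MTlev_mono Φ I v hn'
    have hlt : MTlev Φ I n v < MTlev Φ I n' v := lt_of_le_of_ne hmono hne.symm
    exact ⟨n', by omega⟩

section Witness

variable (I : ℕ → Set C) (nstar : ℕ) (cstar : C)

def IncChain (m : ℕ) (c : C) (ℓ : ℕ) : Prop :=
  ∃ g : ℕ → ℕ × C, g 0 = (m, c) ∧ g ℓ = (nstar, cstar) ∧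
    (∀ j ≤ ℓ, (g j).2 ∈ I (g j).1) ∧
    (∀ j < ℓ, (g j).1 < (g (j + 1)).1 ∧ adjE Φ (g j).2 (g (j + 1)).2)

def Inc (m : ℕ) (c : C) : Prop := ∃ ℓ, IncChain Φ I nstar cstar m c ℓ

noncomputable def dep (m : ℕ) (c : C) : ℕ :=
  Nat.findGreatest (IncChain Φ I nstar cstar m c) (nstar - m)

variable {Φ I nstar cstar}

lemma chain_le {m : ℕ} {c : C} {ℓ : ℕ} (h : IncChain Φ I nstar cstar m c ℓ) :
    m + ℓ ≤ nstar := by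
  obtain ⟨g, h0, hl, -, hstep⟩ := h
  have key : ∀ j, j ≤ ℓ → m + j ≤ (g j).1 := by
    intro j
    induction j with
    | zero => intro _; simp [h0]
    | succ j ih =>
      intro hj
      have h1 := ih (le_of_lt (Nat.lt_of_succ_le hj))
      have h2 := (hstep j (Nat.lt_of_succ_le hj)).1
      omega
  have := key ℓ le_rfl
  rw [hl] at this
  exact this

lemma Inc.memI {m : ℕ} {c : C} (h : Inc Φ I nstar cstar m c) : c ∈ I m := by
  obtain ⟨ℓ, g, h0, -, hmem, -⟩ := h
  have := hmem 0 (Nat.zero_le _)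
  rw [h0] at this
  exact this

lemma Inc.le_nstar {m : ℕ} {c : C} (h : Inc Φ I nstar cstar m c) : m ≤ nstar := by
  obtain ⟨ℓ, hc⟩ := h
  have := chain_le hc
  omega

lemma Inc.dep_spec {m : ℕ} {c : C} (h : Inc Φ I nstar cstar m c) :
    IncChain Φ I nstar cstar m c (dep Φ I nstar cstar m c) := by
  obtain ⟨ℓ, hc⟩ := h
  exact Nat.findGreatest_spec (by have := chain_le hc; omega) hc

lemma dep_ge {m : ℕ} {c : C} {ℓ : ℕ} (h : IncChain Φ I nstar cstar m c ℓ) :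
    ℓ ≤ dep Φ I nstar cstar m c :=
  Nat.le_findGreatest (by have := chain_le h; omega) h

lemma extend {m m' : ℕ} {c c' : C} (h' : Inc Φ I nstar cstar m' c') (hm : m < m')
    (hI : c ∈ I m) (hadj : adjE Φ c c') :
    Inc Φ I nstar cstar m c ∧ dep Φ I nstar cstar m' c' + 1 ≤ dep Φ I nstar cstar m c := by
  obtain ⟨g, h0, hl, hmem, hstep⟩ := h'.dep_spec
  set L := dep Φ I nstar cstar m' c' with hL
  set g2 : ℕ → ℕ × C := fun j => if j = 0 then (m, c) else g (j - 1) with hg2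
  have hchain : IncChain Φ I nstar cstar m c (L + 1) := by
    refine ⟨g2, by simp [hg2], by simp [hg2, hl], ?_, ?_⟩
    · intro j hj
      rcases Nat.eq_zero_or_pos j with rfl | hpos
      · simpa [hg2] using hI
      · have : ¬ (j = 0) := Nat.pos_iff_ne_zero.1 hpos
        simp only [hg2, this, if_false]
        exact hmem (j - 1) (by omega)
    · intro j hj
      rcases Nat.eq_zero_or_pos j with rfl | hpos
      · simp only [hg2, if_pos rfl, if_neg (Nat.one_ne_zero)]
        constructor
        · show m < (g (1 - 1)).1
          simp only [Nat.sub_self, h0]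
          exact hm
        · show adjE Φ c (g (1 - 1)).2
          simp only [Nat.sub_self, h0]
          exact hadj
      · have hjne : ¬ (j = 0) := Nat.pos_iff_ne_zero.1 hpos
        have hjne1 : ¬ (j + 1 = 0) := Nat.succ_ne_zero j
        simp only [hg2, if_neg hjne, if_neg hjne1]
        have hs := hstep (j - 1) (by omega)
        rwa [show j - 1 + 1 = j + 1 - 1 from by omega] at hs
  exact ⟨⟨L + 1, hchain⟩, dep_ge hchain⟩

lemma Inc_nstar {c : C} (h : Inc Φ I nstar cstar nstar c) : c = cstar := by
  obtain ⟨ℓ, hc⟩ := h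
  have hle := chain_le hc
  have hzero : ℓ = 0 := by omega
  subst hzero
  obtain ⟨g, h0, hl, -, -⟩ := hc
  rw [h0] at hl
  exact congrArg Prod.snd hl

lemma dep_nstar : dep Φ I nstar cstar nstar cstar = 0 := by
  rw [dep, Nat.sub_self]
  rfl

lemma dep_pos {m : ℕ} {c : C} (h : Inc Φ I nstar cstar m c) (hm : m < nstar) :
    1 ≤ dep Φ I nstar cstar m c := by
  obtain ⟨ℓ, hc⟩ := h
  rcases Nat.eq_zero_or_pos ℓ with rfl | hpos
  · obtain ⟨g, h0, hl, -, -⟩ := hc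
    rw [h0] at hl
    have : m = nstar := congrArg Prod.fst hl
    omega
  · exact le_trans hpos (dep_ge hc)

lemma parent {m : ℕ} {c : C} {e : ℕ} (h : Inc Φ I nstar cstar m c)
    (hd : dep Φ I nstar cstar m c = e + 1) :
    ∃ m' c', m < m' ∧ Inc Φ I nstar cstar m' c' ∧ dep Φ I nstar cstar m' c' = e ∧
      adjE Φ c c' := by
  obtain ⟨g, h0, hl, hmem, hstep⟩ := h.dep_spec
  rw [hd] at hl hmem hstep
  set m' := (g 1).1 with hm'
  set c' := (g 1).2 with hc'
  have htail : IncChain Φ I nstar cstar m' c' e := by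
    refine ⟨fun j => g (j + 1), Prod.ext rfl rfl, by simpa using hl, ?_, ?_⟩
    · intro j hj; exact hmem (j + 1) (by omega)
    · intro j hj; exact hstep (j + 1) (by omega)
  have hInc' : Inc Φ I nstar cstar m' c' := ⟨e, htail⟩
  have hlt : m < m' := by
    have := (hstep 0 (Nat.succ_pos e)).1
    rw [h0] at this
    exact this
  have hadj : adjE Φ c c' := by
    have := (hstep 0 (Nat.succ_pos e)).2
    rw [h0] at this
    exact this
  have hle : dep Φ I nstar cstar m' c' ≤ e := by
    have := (extend hInc' hlt h.memI hadj).2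
    omega
  exact ⟨m', c', hlt, hInc', le_antisymm hle (dep_ge htail), hadj⟩

lemma chain_ball {m : ℕ} {c : C} {ℓ : ℕ} (h : IncChain Φ I nstar cstar m c ℓ) :
    c ∈ gball Φ.depGraph cstar ℓ := by
  induction ℓ generalizing m c with
  | zero =>
    obtain ⟨g, h0, hl, -, -⟩ := h
    rw [h0] at hl
    have hc : c = cstar := congrArg Prod.snd hl
    rw [hc]
    exact rfl
  | succ ℓ ih =>
    obtain ⟨g, h0, hl, hmem, hstep⟩ := h
    have htail : IncChain Φ I nstar cstar (g 1).1 (g 1).2 ℓ := by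
      refine ⟨fun j => g (j + 1), by simp, by simpa using hl, ?_, ?_⟩
      · intro j hj; exact hmem (j + 1) (by omega)
      · intro j hj; exact hstep (j + 1) (by omega)
    have hadj : adjE Φ c (g 1).2 := by
      have := (hstep 0 (Nat.succ_pos ℓ)).2
      rw [h0] at this
      exact this
    exact gball_adjE Φ rfl (ih htail) hadj

lemma Inc_finite (hlf : ∀ c, (Φ.depGraph.neighborSet c).Finite) :
    {q : ℕ × C | Inc Φ I nstar cstar q.1 q.2}.Finite := by
  apply Set.Finite.subset ((Set.finite_Iic nstar).prod (gball_finite Φ.depGraph hlf cstar nstar))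
  rintro ⟨m, c⟩ hq
  obtain ⟨ℓ, hc⟩ := hq
  have h1 : m ≤ nstar := by have := chain_le hc; omega
  have h2 : c ∈ gball Φ.depGraph cstar nstar :=
    gball_mono _ _ (by have := chain_le hc; omega) (chain_ball hc)
  exact ⟨h1, h2⟩

end Witness

lemma witness_exists (hlf : ∀ c, (Φ.depGraph.neighborSet c).Finite)
    (t : (V × ℕ) → Λ) (I : ℕ → Set C)
    (hcons : Φ.Consistent (fun vv n => t (vv, n)) I) (v : V)
    (hns : ¬ StabilizesAt Φ I v) (N : ℕ) :
    ∃ c₀ T, v ∈ Φ.dom c₀ ∧ ProperWS Φ c₀ T ∧ N ≤ T.card ∧ t ∈ Ev Φ T := by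
  classical
  obtain ⟨hind, hviol⟩ := hcons
  have huniq : ∀ m (u : V) (c₁ c₂ : C), c₁ ∈ I m → c₂ ∈ I m → u ∈ Φ.dom c₁ → u ∈ Φ.dom c₂ →
      c₁ = c₂ := by
    intro m u c₁ c₂ h1 h2 hu1 hu2
    by_contra hne
    exact hind m c₁ h1 c₂ h2 (show c₁ ≠ c₂ ∧ (Φ.dom c₁ ∩ Φ.dom c₂).Nonempty from ⟨hne, ⟨u, hu1, hu2⟩⟩)
  obtain ⟨n₁, hn₁⟩ := MTlev_unbounded Φ I v hns (max N 1)
  set RS : Finset ℕ := (Finset.range n₁).filter (fun m => ∃ c ∈ I m, v ∈ Φ.dom c) with hRS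
  have hRScard : max N 1 ≤ RS.card := by
    rw [hRS, ← MTlev_count]
    exact hn₁
  have hRSne : RS.Nonempty := Finset.card_pos.1 (by omega)
  set nstar := RS.max' hRSne with hnstar
  have hnstar_mem := RS.max'_mem hRSne
  have hres_nstar : ∃ c ∈ I nstar, v ∈ Φ.dom c := (Finset.mem_filter.1 hnstar_mem).2
  obtain ⟨cstar, hcstarI, hcstarv⟩ := hres_nstar
  have hcw : ∀ (u : V) (m : ℕ), (∃ c ∈ I m, u ∈ Φ.dom c) → ∃ c, c ∈ I m ∧ u ∈ Φ.dom c := by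
    intro u m h
    obtain ⟨c, h1, h2⟩ := h
    exact ⟨c, h1, h2⟩
  set cw : V → ℕ → C := fun u m =>
    if h : ∃ c ∈ I m, u ∈ Φ.dom c then (hcw u m h).choose else cstar with hcwdef
  have hcwspec : ∀ (u : V) (m : ℕ), (∃ c ∈ I m, u ∈ Φ.dom c) →
      cw u m ∈ I m ∧ u ∈ Φ.dom (cw u m) := by
    intro u m h
    simp only [hcwdef, dif_pos h]
    exact (hcw u m h).choose_spec
  have hIncTop : Inc Φ I nstar cstar nstar cstar := by
    refine ⟨0, fun _ => (nstar, cstar), rfl, rfl, ?_, ?_⟩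
    · intro j _
      exact hcstarI
    · intro j hj
      exact absurd hj (Nat.not_lt_zero j)
  have hIncFin : {q : ℕ × C | Inc Φ I nstar cstar q.1 q.2}.Finite := Inc_finite hlf
  set IncF := hIncFin.toFinset with hIncF
  have hmemIncF : ∀ m c, Inc Φ I nstar cstar m c ↔ (m, c) ∈ IncF := by
    intro m c
    rw [hIncF, Set.Finite.mem_toFinset]
    exact Iff.rfl
  set TW : Finset (ℕ × C) :=
    IncF.image (fun q => (dep Φ I nstar cstar q.1 q.2, q.2)) with hTW
  have hmemTW : ∀ {m c}, Inc Φ I nstar cstar m c → (dep Φ I nstar cstar m c, c) ∈ TW := by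
    intro m c h
    exact Finset.mem_image.2 ⟨(m, c), (hmemIncF m c).1 h, rfl⟩
  have hTWsrc : ∀ y ∈ TW, ∃ m c, Inc Φ I nstar cstar m c ∧ y = (dep Φ I nstar cstar m c, c) := by
    intro y hy
    obtain ⟨q, hq, hqy⟩ := Finset.mem_image.1 hy
    exact ⟨q.1, q.2, (hmemIncF q.1 q.2).2 hq, hqy.symm⟩
  have hdlt : ∀ {m c m' c'}, Inc Φ I nstar cstar m c → Inc Φ I nstar cstar m' c' →
      m < m' → adjE Φ c c' → dep Φ I nstar cstar m' c' < dep Φ I nstar cstar m c := by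
    intro m c m' c' h h' hm hadj
    have := (extend h' hm h.memI hadj).2
    omega
  have hproper : ProperWS Φ cstar TW := by
    refine ⟨?_, ?_, ?_, ?_⟩
    · have h0 := hmemTW hIncTop
      rwa [dep_nstar] at h0
    · intro c hc
      obtain ⟨m, c', hInc, heq⟩ := hTWsrc _ hc
      have hc' : c = c' := congrArg Prod.snd heq
      have hd : dep Φ I nstar cstar m c' = 0 := (congrArg Prod.fst heq).symm
      subst hc'
      rcases lt_or_eq_of_le hInc.le_nstar with hlt | hEq
      · have := dep_pos hInc hlt
        omega
      · subst hEq
        exact Inc_nstar hInc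
    · intro e c hc
      obtain ⟨m, c', hInc, heq⟩ := hTWsrc _ hc
      have hc' : c = c' := congrArg Prod.snd heq
      have hd : dep Φ I nstar cstar m c' = e + 1 := (congrArg Prod.fst heq).symm
      subst hc'
      obtain ⟨m', c'', hm, hInc', hd', hadj⟩ := parent hInc hd
      refine ⟨c'', ?_, adjE_symm Φ hadj⟩
      have := hmemTW hInc'
      rwa [hd'] at this
    · intro e c c2 hc hc2 hne hadj
      obtain ⟨m, c', hInc, heq⟩ := hTWsrc _ hc
      have hceq : c = c' := congrArg Prod.snd heq
      have hd : dep Φ I nstar cstar m c' = e := (congrArg Prod.fst heq).symm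
      subst hceq
      obtain ⟨m2, c2', hInc2, heq2⟩ := hTWsrc _ hc2
      have hceq2 : c2 = c2' := congrArg Prod.snd heq2
      have hd2 : dep Φ I nstar cstar m2 c2' = e := (congrArg Prod.fst heq2).symm
      subst hceq2
      rcases lt_trichotomy m m2 with h | h | h
      · have := hdlt hInc hInc2 h (Or.inr hadj)
        omega
      · subst h
        exact hind m c hInc.memI c2 hInc2.memI hadj
      · have := hdlt hInc2 hInc h (Or.inr hadj.symm)
        omega
  have hvInc : ∀ m, m ∈ insert nstar ((Finset.range nstar).filter
      (fun m => ∃ c ∈ I m, v ∈ Φ.dom c)) →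
      Inc Φ I nstar cstar m (cw v m) ∧ v ∈ Φ.dom (cw v m) := by
    intro m hm
    rcases Finset.mem_insert.1 hm with heq | hm'
    · subst heq
      have hres : ∃ c ∈ I nstar, v ∈ Φ.dom c := ⟨cstar, hcstarI, hcstarv⟩
      have hsp := hcwspec v nstar hres
      have hce : cw v nstar = cstar := huniq nstar v _ _ hsp.1 hcstarI hsp.2 hcstarv
      rw [hce]
      exact ⟨hIncTop, hcstarv⟩
    · have hmem := Finset.mem_filter.1 hm'
      have hsp := hcwspec v m hmem.2
      have hlt : m < nstar := Finset.mem_range.1 hmem.1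
      have hadj : adjE Φ (cw v m) cstar := adjE_of_shared Φ hsp.2 hcstarv
      exact ⟨(extend hIncTop hlt hsp.1 hadj).1, hsp.2⟩
  have hcard : max N 1 ≤ TW.card := by
    have h1 : RS ⊆ insert nstar ((Finset.range nstar).filter
        (fun m => ∃ c ∈ I m, v ∈ Φ.dom c)) := by
      intro m hm
      have hmle : m ≤ nstar := RS.le_max' m hm
      rcases eq_or_lt_of_le hmle with rfl | hlt
      · exact Finset.mem_insert_self _ _
      · exact Finset.mem_insert_of_mem
          (Finset.mem_filter.2 ⟨Finset.mem_range.2 hlt, (Finset.mem_filter.1 hm).2⟩)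
    calc max N 1 ≤ RS.card := hRScard
      _ ≤ _ := Finset.card_le_card h1
      _ ≤ TW.card := by
          apply Finset.card_le_card_of_injOn (fun m => (dep Φ I nstar cstar m (cw v m), cw v m))
          · intro m hm
            exact hmemTW (hvInc m hm).1
          · intro m hm m' hm' heq
            simp only [Finset.mem_coe] at hm hm'
            by_contra hne
            rcases Nat.lt_or_ge m m' with h | h
            · have := hdlt (hvInc m hm).1 (hvInc m' hm').1 h
                (adjE_of_shared Φ (hvInc m hm).2 (hvInc m' hm').2)
              have hfst : dep Φ I nstar cstar m (cw v m) =
                  dep Φ I nstar cstar m' (cw v m') := congrArg Prod.fst heq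
              omega
            · have h' : m' < m := by omega
              have := hdlt (hvInc m' hm').1 (hvInc m hm).1 h'
                (adjE_of_shared Φ (hvInc m' hm').2 (hvInc m hm).2)
              have hfst : dep Φ I nstar cstar m (cw v m) =
                  dep Φ I nstar cstar m' (cw v m') := congrArg Prod.fst heq
              omega
  have hEv : t ∈ Ev Φ TW := by
    apply Set.mem_iInter₂.2
    intro y hy
    obtain ⟨m, c, hInc, hyeq⟩ := hTWsrc y hy
    subst hyeq
    have hkey : ∀ u : V, u ∈ Φ.dom c →
        κf Φ TW (dep Φ I nstar cstar m c) u = MTlev Φ I m u := by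
      intro u hu
      rw [MTlev_count]
      show (TW.filter _).card = _
      symm
      apply Finset.card_bij (fun m' _ => (dep Φ I nstar cstar m' (cw u m'), cw u m'))
      · intro m' hm'
        have hmem := Finset.mem_filter.1 hm'
        have hlt : m' < m := Finset.mem_range.1 hmem.1
        have hsp := hcwspec u m' hmem.2
        have hadj : adjE Φ (cw u m') c := adjE_of_shared Φ hsp.2 hu
        have hInc' := (extend hInc hlt hsp.1 hadj).1
        refine Finset.mem_filter.2 ⟨hmemTW hInc', ?_, hsp.2⟩
        exact hdlt hInc' hInc hlt hadj
      · intro m1 hm1 m2 hm2 heq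
        by_contra hne
        have hsp1 := hcwspec u m1 (Finset.mem_filter.1 hm1).2
        have hsp2 := hcwspec u m2 (Finset.mem_filter.1 hm2).2
        have hfst : dep Φ I nstar cstar m1 (cw u m1) =
            dep Φ I nstar cstar m2 (cw u m2) := congrArg Prod.fst heq
        have hInc1 : Inc Φ I nstar cstar m1 (cw u m1) :=
          (extend hInc (Finset.mem_range.1 (Finset.mem_filter.1 hm1).1) hsp1.1
            (adjE_of_shared Φ hsp1.2 hu)).1
        have hInc2 : Inc Φ I nstar cstar m2 (cw u m2) :=
          (extend hInc (Finset.mem_range.1 (Finset.mem_filter.1 hm2).1) hsp2.1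
            (adjE_of_shared Φ hsp2.2 hu)).1
        rcases Nat.lt_or_ge m1 m2 with h | h
        · have := hdlt hInc1 hInc2 h (adjE_of_shared Φ hsp1.2 hsp2.2)
          omega
        · have h' : m2 < m1 := by omega
          have := hdlt hInc2 hInc1 h' (adjE_of_shared Φ hsp2.2 hsp1.2)
          omega
      · intro b hb
        obtain ⟨hbTW, hbgt, hbu⟩ := Finset.mem_filter.1 hb
        obtain ⟨m2, c2, hInc2, hbeq⟩ := hTWsrc b hbTW
        subst hbeq
        rcases lt_trichotomy m2 m with h | h | h
        · have hresu : ∃ cc ∈ I m2, u ∈ Φ.dom cc := ⟨c2, hInc2.memI, hbu⟩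
          refine ⟨m2, Finset.mem_filter.2 ⟨Finset.mem_range.2 h, hresu⟩, ?_⟩
          have hsp := hcwspec u m2 hresu
          have hce : cw u m2 = c2 := huniq m2 u _ _ hsp.1 hInc2.memI hsp.2 hbu
          rw [hce]
        · subst h
          have : c2 = c := huniq m2 u c2 c hInc2.memI hInc.memI hbu hu
          subst this
          simp only at hbgt
          omega
        · have := hdlt hInc hInc2 h (adjE_of_shared Φ hu hbu)
          simp only at hbgt
          omega
    show t ∈ EvOne Φ TW (dep Φ I nstar cstar m c, c)
    have hviol' : (fun u : ↥(Φ.dom c) => t ((u : V), MTlev Φ I m (u : V))) ∈ Φ.Bad c :=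
      hviol m c hInc.memI
    show (fun u : ↥(Φ.dom c) =>
        t ((u : V), κf Φ TW (dep Φ I nstar cstar m c) (u : V))) ∈ Φ.Bad c
    have hfun : (fun u : ↥(Φ.dom c) =>
        t ((u : V), κf Φ TW (dep Φ I nstar cstar m c) (u : V))) =
        (fun u : ↥(Φ.dom c) => t ((u : V), MTlev Φ I m (u : V))) := by
      funext u
      rw [hkey (u : V) u.2]
    rw [hfun]
    exact hviol'
  exact ⟨cstar, TW, hcstarv, hproper, le_trans (le_max_left N 1) hcard, hEv⟩

/-! ### Counting witness structures -/

section Counting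

variable (hlf : ∀ c, (Φ.depGraph.neighborSet c).Finite)

noncomputable def NbdF (c : C) : Finset C := insert c (hlf c).toFinset

lemma mem_NbdF {c a : C} (h : adjE Φ c a) : a ∈ NbdF Φ hlf c := by
  rcases h with rfl | h
  · exact Finset.mem_insert_self _ _
  · exact Finset.mem_insert_of_mem ((hlf c).mem_toFinset.2 h)

variable {hlf}

noncomputable def parT (T : Finset (ℕ × C)) (e : ℕ) (x : C) : C :=
  if h : ∃ c', (e - 1, c') ∈ T ∧ adjE Φ c' x then h.choose else x

noncomputable def ancT (T : Finset (ℕ × C)) : ℕ → C → C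
  | 0, x => x
  | 1, x => x
  | (e+2), x => ancT T (e+1) (parT Φ T (e+2) x)

noncomputable def ThetaT (T : Finset (ℕ × C)) (c' : C) : Finset (ℕ × C) :=
  (T.filter (fun y => 1 ≤ y.1 ∧ ancT Φ T y.1 y.2 = c')).image (fun y => (y.1 - 1, y.2))

variable {Φ}

lemma par_spec {c₀ : C} {T : Finset (ℕ × C)} (hP : ProperWS Φ c₀ T) {e : ℕ} {x : C}
    (hx : (e + 1, x) ∈ T) :
    (e, parT Φ T (e + 1) x) ∈ T ∧ adjE Φ (parT Φ T (e + 1) x) x := by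
  have h : ∃ c', (e + 1 - 1, c') ∈ T ∧ adjE Φ c' x := by
    obtain ⟨c', hc', hadj⟩ := hP.2.2.1 e x hx
    exact ⟨c', by simpa using hc', hadj⟩
  rw [parT, dif_pos h]
  have := h.choose_spec
  simpa using this

lemma anc_mem {c₀ : C} {T : Finset (ℕ × C)} (hP : ProperWS Φ c₀ T) :
    ∀ (e : ℕ) (x : C), (e + 1, x) ∈ T → (1, ancT Φ T (e + 1) x) ∈ T := by
  intro e
  induction e with
  | zero => intro x hx; exact hx
  | succ e ih =>
    intro x hx
    have hpar := par_spec hP hx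
    exact ih _ hpar.1

lemma anc_nbd {c₀ : C} {T : Finset (ℕ × C)} (hP : ProperWS Φ c₀ T) {e : ℕ} {x : C}
    (hx : (e + 1, x) ∈ T) : ancT Φ T (e + 1) x ∈ NbdF Φ hlf c₀ := by
  have h1 := anc_mem hP e x hx
  have hpar := par_spec hP h1
  have h0 : parT Φ T (0 + 1) (ancT Φ T (e + 1) x) = c₀ := hP.2.1 _ hpar.1
  have := hpar.2
  rw [h0] at this
  exact mem_NbdF Φ hlf this

lemma mem_theta {T : Finset (ℕ × C)} {c' : C} {e : ℕ} {x : C} :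
    (e, x) ∈ ThetaT Φ T c' ↔ ((e + 1, x) ∈ T ∧ ancT Φ T (e + 1) x = c') := by
  rw [ThetaT, Finset.mem_image]
  constructor
  · rintro ⟨y, hy, hyx⟩
    obtain ⟨hyT, h1, hanc⟩ := Finset.mem_filter.1 hy
    obtain ⟨e', x'⟩ := y
    have he : e' - 1 = e := congrArg Prod.fst hyx
    have hx' : x' = x := congrArg Prod.snd hyx
    subst hx'
    simp only at h1 hanc he ⊢
    have he' : e' = e + 1 := by omega
    subst he'
    exact ⟨hyT, hanc⟩
  · rintro ⟨hT, hanc⟩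
    exact ⟨(e + 1, x), Finset.mem_filter.2 ⟨hT, by omega, hanc⟩, by simp⟩

lemma recon {c₀ : C} {T : Finset (ℕ × C)} (hP : ProperWS Φ c₀ T) :
    T = insert (0, c₀) ((NbdF Φ hlf c₀).biUnion
      (fun c' => (ThetaT Φ T c').image (fun y => (y.1 + 1, y.2)))) := by
  apply Finset.Subset.antisymm
  · rintro ⟨e, x⟩ hy
    match e with
    | 0 =>
      have := hP.2.1 x hy
      subst this
      exact Finset.mem_insert_self _ _
    | e + 1 =>
      apply Finset.mem_insert_of_mem
      apply Finset.mem_biUnion.2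
      refine ⟨ancT Φ T (e + 1) x, anc_nbd hP hy, ?_⟩
      apply Finset.mem_image.2
      exact ⟨(e, x), mem_theta.2 ⟨hy, rfl⟩, rfl⟩
  · intro y hy
    rcases Finset.mem_insert.1 hy with rfl | hy'
    · exact hP.1
    · obtain ⟨c', -, hc'⟩ := Finset.mem_biUnion.1 hy'
      obtain ⟨w, hw, hwy⟩ := Finset.mem_image.1 hc'
      obtain ⟨e, x⟩ := w
      have := (mem_theta.1 hw).1
      rwa [← hwy]

lemma card_split {c₀ : C} {T : Finset (ℕ × C)} (hP : ProperWS Φ c₀ T) :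
    T.card = 1 + ∑ c' ∈ NbdF Φ hlf c₀, (ThetaT Φ T c').card := by
  classical
  have hcard_theta : ∀ c', (ThetaT Φ T c').card =
      (T.filter (fun y => 1 ≤ y.1 ∧ ancT Φ T y.1 y.2 = c')).card := by
    intro c'
    rw [ThetaT]
    apply Finset.card_image_of_injOn
    intro y hy y' hy' hyy
    have h1 := (Finset.mem_filter.1 hy).2.1
    have h1' := (Finset.mem_filter.1 hy').2.1
    have hyy' : (y.1 - 1, y.2) = (y'.1 - 1, y'.2) := hyy
    injection hyy' with he hx
    exact Prod.ext (by omega) hx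
  have hsplit : T.filter (fun y => 1 ≤ y.1) =
      (NbdF Φ hlf c₀).biUnion
        (fun c' => T.filter (fun y => 1 ≤ y.1 ∧ ancT Φ T y.1 y.2 = c')) := by
    apply Finset.Subset.antisymm
    · rintro ⟨e, x⟩ hy
      obtain ⟨hyT, h1⟩ := Finset.mem_filter.1 hy
      simp only at h1
      obtain ⟨e', rfl⟩ : ∃ e', e = e' + 1 := ⟨e - 1, by omega⟩
      apply Finset.mem_biUnion.2
      exact ⟨ancT Φ T (e' + 1) x, anc_nbd hP hyT,
        Finset.mem_filter.2 ⟨hyT, by omega, rfl⟩⟩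
    · intro y hy
      obtain ⟨c', -, hc'⟩ := Finset.mem_biUnion.1 hy
      have := Finset.mem_filter.1 hc'
      exact Finset.mem_filter.2 ⟨this.1, this.2.1⟩
  have hdisj : ∀ a ∈ NbdF Φ hlf c₀, ∀ b ∈ NbdF Φ hlf c₀, a ≠ b →
      Disjoint (T.filter (fun y => 1 ≤ y.1 ∧ ancT Φ T y.1 y.2 = a))
        (T.filter (fun y => 1 ≤ y.1 ∧ ancT Φ T y.1 y.2 = b)) := by
    intro a _ b _ hab
    rw [Finset.disjoint_left]
    intro y hy hy'
    exact hab (((Finset.mem_filter.1 hy).2.2).symm.trans (Finset.mem_filter.1 hy').2.2)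
  have hzero : T.filter (fun y => ¬ (1 ≤ y.1)) = {(0, c₀)} := by
    apply Finset.eq_singleton_iff_unique_mem.2
    constructor
    · exact Finset.mem_filter.2 ⟨hP.1, by simp⟩
    · rintro ⟨e, x⟩ hy
      obtain ⟨hyT, h1⟩ := Finset.mem_filter.1 hy
      simp only at h1
      have he : e = 0 := by omega
      subst he
      have := hP.2.1 x hyT
      rw [this]
  have := Finset.card_filter_add_card_filter_not
    (s := T) (p := fun y => 1 ≤ y.1)
  rw [hsplit, hzero, Finset.card_biUnion hdisj] at this
  simp only [Finset.card_singleton] at this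
  rw [← this]
  have : ∀ c' ∈ NbdF Φ hlf c₀, (ThetaT Φ T c').card =
      (T.filter (fun y => 1 ≤ y.1 ∧ ancT Φ T y.1 y.2 = c')).card :=
    fun c' _ => hcard_theta c'
  rw [Finset.sum_congr rfl this]
  omega

lemma theta_proper {c₀ : C} {T : Finset (ℕ × C)} (hP : ProperWS Φ c₀ T) (c' : C)
    (hne : (ThetaT Φ T c').Nonempty) : ProperWS Φ c' (ThetaT Φ T c') := by
  have hroot : (0, c') ∈ ThetaT Φ T c' := by
    obtain ⟨⟨e, x⟩, hy⟩ := hne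
    obtain ⟨hT, hanc⟩ := mem_theta.1 hy
    obtain ⟨e', rfl⟩ : ∃ e', e = e' + 1 - 1 := ⟨e + 1 - 1, by omega⟩
    apply mem_theta.2
    constructor
    · have := anc_mem hP _ _ hT
      rwa [hanc] at this
    · rfl
  refine ⟨hroot, ?_, ?_, ?_⟩
  · intro x hx
    have h := (mem_theta.1 hx).2
    exact h
  · intro e x hx
    obtain ⟨hT, hanc⟩ := mem_theta.1 hx
    have hpar := par_spec hP hT
    refine ⟨parT Φ T (e + 2) x, ?_, hpar.2⟩
    apply mem_theta.2
    exact ⟨hpar.1, hanc⟩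
  · intro e x x' hx hx' hne'
    exact hP.2.2.2 (e + 1) x x' (mem_theta.1 hx).1 (mem_theta.1 hx').1 hne'

variable (Φ) (hlf)

noncomputable def SW (x : ℝ) (c : C) (n : ℕ) : ℝ :=
  ∑ k ∈ Finset.Icc 1 n, ((TT Φ hlf c k).card : ℝ) * x ^ k

noncomputable def allowedF (c' : C) (m : ℕ) : Finset (Finset (ℕ × C)) :=
  insert ∅ ((Finset.Icc 1 m).biUnion (fun k => TT Φ hlf c' k))

variable {Φ} {hlf}

lemma TT_spec {c : C} {k : ℕ} {T : Finset (ℕ × C)} (h : T ∈ TT Φ hlf c k) :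
    ProperWS Φ c T ∧ T.card = k := (Finset.mem_filter.1 h).2

lemma TT_pairwise_disj (c' : C) (s : Finset ℕ) :
    Set.PairwiseDisjoint ↑s (fun k => TT Φ hlf c' k) := by
  intro k₁ _ k₂ _ hne
  rw [Function.onFun, Finset.disjoint_left]
  intro T hT hT'
  exact hne (((TT_spec hT).2).symm.trans (TT_spec hT').2)

lemma sum_TT (x : ℝ) (c' : C) (k : ℕ) :
    ∑ A ∈ TT Φ hlf c' k, x ^ A.card = ((TT Φ hlf c' k).card : ℝ) * x ^ k := by
  rw [Finset.sum_congr rfl (fun A hA => by rw [(TT_spec hA).2]), Finset.sum_const,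
    nsmul_eq_mul]

lemma sum_allowed (x : ℝ) (c' : C) (m : ℕ) :
    ∑ A ∈ allowedF Φ hlf c' m, x ^ A.card = 1 + SW Φ hlf x c' m := by
  rw [allowedF, Finset.sum_insert, Finset.sum_biUnion (TT_pairwise_disj c' _)]
  · rw [Finset.card_empty, pow_zero, SW]
    congr 1
    exact Finset.sum_congr rfl (fun k _ => sum_TT x c' k)
  · intro h
    obtain ⟨k, hk, hmem⟩ := Finset.mem_biUnion.1 h
    have h0 : (∅ : Finset (ℕ × C)).card = k := (TT_spec hmem).2
    rw [Finset.card_empty] at h0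
    have := (Finset.mem_Icc.1 hk).1
    omega

lemma SW_nonneg (x : ℝ) (hx : 0 ≤ x) (c : C) (n : ℕ) : 0 ≤ SW Φ hlf x c n :=
  Finset.sum_nonneg (fun k _ => mul_nonneg (Nat.cast_nonneg _) (pow_nonneg hx _))

set_option maxHeartbeats 4000000 in
lemma SW_rec (x : ℝ) (hx : 0 ≤ x) (c : C) (n : ℕ) :
    SW Φ hlf x c n ≤ x * ∏ c' ∈ NbdF Φ hlf c, (1 + SW Φ hlf x c' (n - 1)) := by
  classical
  set 𝒮 := (Finset.Icc 1 n).biUnion (fun k => TT Φ hlf c k) with h𝒮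
  have hSWsum : SW Φ hlf x c n = ∑ T ∈ 𝒮, x ^ T.card := by
    rw [h𝒮, Finset.sum_biUnion (TT_pairwise_disj c _), SW]
    exact (Finset.sum_congr rfl (fun k _ => sum_TT x c k)).symm
  have hmem𝒮 : ∀ T ∈ 𝒮, ProperWS Φ c T ∧ 1 ≤ T.card ∧ T.card ≤ n := by
    intro T hT
    obtain ⟨k, hk, hTk⟩ := Finset.mem_biUnion.1 hT
    have h2 := TT_spec hTk
    have h3 := Finset.mem_Icc.1 hk
    refine ⟨h2.1, ?_, ?_⟩ <;> rw [h2.2] <;> omega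
  set F : Finset (ℕ × C) → (∀ a ∈ NbdF Φ hlf c, Finset (ℕ × C)) :=
    fun T => fun c' _ => ThetaT Φ T c' with hF
  have hmaps : ∀ T ∈ 𝒮, F T ∈ (NbdF Φ hlf c).pi (fun c' => allowedF Φ hlf c' (n - 1)) := by
    intro T hT
    apply Finset.mem_pi.2
    intro c' hc'
    by_cases hne : (ThetaT Φ T c').Nonempty
    · apply Finset.mem_insert_of_mem
      apply Finset.mem_biUnion.2
      refine ⟨(ThetaT Φ T c').card, Finset.mem_Icc.2 ⟨Finset.card_pos.2 hne, ?_⟩,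
        mem_TT Φ hlf (theta_proper (hmem𝒮 T hT).1 c' hne)⟩
      have hsp := card_split (hlf := hlf) (hmem𝒮 T hT).1
      have hle : (ThetaT Φ T c').card ≤ ∑ c'' ∈ NbdF Φ hlf c, (ThetaT Φ T c'').card :=
        Finset.single_le_sum (f := fun c'' => (ThetaT Φ T c'').card)
          (fun _ _ => Nat.zero_le _) hc'
      have := (hmem𝒮 T hT).2.2
      omega
    · rw [Finset.not_nonempty_iff_eq_empty] at hne
      rw [hF]
      simp only [hne]
      exact Finset.mem_insert_self _ _
  have hinj : Set.InjOn F ↑𝒮 := by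
    intro T₁ h₁ T₂ h₂ hFT
    rw [Finset.mem_coe] at h₁ h₂
    have hrec₁ := recon (hlf := hlf) (hmem𝒮 T₁ h₁).1
    have hrec₂ := recon (hlf := hlf) (hmem𝒮 T₂ h₂).1
    rw [hrec₁, hrec₂]
    congr 1
    apply Finset.biUnion_congr rfl
    intro c' hc'
    have hth : ThetaT Φ T₁ c' = ThetaT Φ T₂ c' := by
      have h4 := congrFun hFT c'
      exact congrFun h4 hc'
    rw [hth]
  have hcardprod : ∀ T ∈ 𝒮, x ^ T.card =
      x * ∏ a ∈ (NbdF Φ hlf c).attach, x ^ ((F T) a.1 a.2).card := by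
    intro T hT
    rw [card_split (hlf := hlf) (hmem𝒮 T hT).1, pow_add, pow_one]
    congr 1
    rw [Finset.prod_pow_eq_pow_sum]
    congr 1
    rw [← Finset.sum_attach (NbdF Φ hlf c) (fun c' => (ThetaT Φ T c').card)]
  calc SW Φ hlf x c n = ∑ T ∈ 𝒮, x ^ T.card := hSWsum
    _ = ∑ T ∈ 𝒮, (x * ∏ a ∈ (NbdF Φ hlf c).attach, x ^ ((F T) a.1 a.2).card) :=
        Finset.sum_congr rfl hcardprod
    _ = ∑ f ∈ 𝒮.image F, (x * ∏ a ∈ (NbdF Φ hlf c).attach, x ^ ((f) a.1 a.2).card) :=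
        (Finset.sum_image (g := F) (f := fun ff => x * ∏ a ∈ (NbdF Φ hlf c).attach,
          x ^ ((ff) a.1 a.2).card) (fun a ha b hb h => hinj ha hb h)).symm
    _ ≤ ∑ f ∈ (NbdF Φ hlf c).pi (fun c' => allowedF Φ hlf c' (n - 1)),
          (x * ∏ a ∈ (NbdF Φ hlf c).attach, x ^ ((f) a.1 a.2).card) := by
        apply Finset.sum_le_sum_of_subset_of_nonneg
        · intro f hf
          obtain ⟨T, hT, rfl⟩ := Finset.mem_image.1 hf
          exact hmaps T hT
        · intro f _ _
          exact mul_nonneg hx (Finset.prod_nonneg (fun _ _ => pow_nonneg hx _))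
    _ = x * ∑ f ∈ (NbdF Φ hlf c).pi (fun c' => allowedF Φ hlf c' (n - 1)),
          ∏ a ∈ (NbdF Φ hlf c).attach, x ^ ((f) a.1 a.2).card := by
        rw [Finset.mul_sum]
    _ = x * ∏ c' ∈ NbdF Φ hlf c, ∑ A ∈ allowedF Φ hlf c' (n - 1), x ^ A.card := by
        rw [Finset.prod_sum]
    _ = x * ∏ c' ∈ NbdF Φ hlf c, (1 + SW Φ hlf x c' (n - 1)) := by
        congr 1
        exact Finset.prod_congr rfl (fun c' _ => sum_allowed x c' (n - 1))

lemma SW_le (d : ℕ) (hd : ∀ c : C, (NbdF Φ hlf c).card ≤ d + 1) (x μ : ℝ) (hx : 0 ≤ x)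
    (hμ : 0 ≤ μ) (hkey : x * (1 + μ) ^ (d + 1) ≤ μ) : ∀ n, ∀ c, SW Φ hlf x c n ≤ μ := by
  intro n
  induction n with
  | zero =>
    intro c
    rw [SW]
    simp [hμ]
  | succ n ih =>
    intro c
    calc SW Φ hlf x c (n + 1) ≤ x * ∏ c' ∈ NbdF Φ hlf c, (1 + SW Φ hlf x c' (n + 1 - 1)) :=
          SW_rec x hx c (n + 1)
      _ ≤ x * ∏ _c' ∈ NbdF Φ hlf c, (1 + μ) := by
          apply mul_le_mul_of_nonneg_left _ hx
          apply Finset.prod_le_prod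
          · intro c' _
            have := SW_nonneg (Φ := Φ) (hlf := hlf) x hx c' n
            simp only [Nat.add_sub_cancel]
            linarith
          · intro c' _
            simp only [Nat.add_sub_cancel]
            have := ih c'
            linarith
      _ = x * (1 + μ) ^ (NbdF Φ hlf c).card := by rw [Finset.prod_const]
      _ ≤ x * (1 + μ) ^ (d + 1) := by
          apply mul_le_mul_of_nonneg_left _ hx
          apply pow_le_pow_right₀ (by linarith)
          exact hd c
      _ ≤ μ := hkey

lemma SW_tail (x p μ : ℝ) (hp0 : 0 ≤ p) (hpx : p ≤ x) (hx0 : 0 < x) (hμ : 0 ≤ μ)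
    (hSW : ∀ n, ∀ c : C, SW Φ hlf x c n ≤ μ) (N : ℕ) (hN : 1 ≤ N) (c : C) (n : ℕ) :
    ∑ k ∈ Finset.Icc N n, ((TT Φ hlf c k).card : ℝ) * p ^ k ≤ (p / x) ^ N * μ := by
  have hterm : ∀ k ∈ Finset.Icc N n,
      ((TT Φ hlf c k).card : ℝ) * p ^ k ≤ (p / x) ^ N * (((TT Φ hlf c k).card : ℝ) * x ^ k) := by
    intro k hk
    have hkN : N ≤ k := (Finset.mem_Icc.1 hk).1
    have h1 : p ^ k ≤ (p / x) ^ N * x ^ k := by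
      have hpx1 : p / x ≤ 1 := div_le_one_of_le₀ hpx (le_of_lt hx0)
      have hpx0 : 0 ≤ p / x := div_nonneg hp0 (le_of_lt hx0)
      have h2 : (p / x) ^ k ≤ (p / x) ^ N := pow_le_pow_of_le_one hpx0 hpx1 hkN
      have h3 : p ^ k = (p / x) ^ k * x ^ k := by
        rw [div_pow, div_mul_cancel₀]
        exact pow_ne_zero _ (ne_of_gt hx0)
      rw [h3]
      exact mul_le_mul_of_nonneg_right h2 (pow_nonneg (le_of_lt hx0) _)
    calc ((TT Φ hlf c k).card : ℝ) * p ^ k ≤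
        ((TT Φ hlf c k).card : ℝ) * ((p / x) ^ N * x ^ k) :=
          mul_le_mul_of_nonneg_left h1 (Nat.cast_nonneg _)
      _ = (p / x) ^ N * (((TT Φ hlf c k).card : ℝ) * x ^ k) := by ring
  calc ∑ k ∈ Finset.Icc N n, ((TT Φ hlf c k).card : ℝ) * p ^ k ≤
      ∑ k ∈ Finset.Icc N n, (p / x) ^ N * (((TT Φ hlf c k).card : ℝ) * x ^ k) :=
        Finset.sum_le_sum hterm
    _ = (p / x) ^ N * ∑ k ∈ Finset.Icc N n, ((TT Φ hlf c k).card : ℝ) * x ^ k := by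
        rw [Finset.mul_sum]
    _ ≤ (p / x) ^ N * SW Φ hlf x c n := by
        apply mul_le_mul_of_nonneg_left _ (pow_nonneg (div_nonneg hp0 (le_of_lt hx0)) _)
        rw [SW]
        apply Finset.sum_le_sum_of_subset_of_nonneg
        · intro k hk
          have := Finset.mem_Icc.1 hk
          exact Finset.mem_Icc.2 ⟨by omega, this.2⟩
        · intro k _ _
          exact mul_nonneg (Nat.cast_nonneg _) (pow_nonneg (le_of_lt hx0) _)
    _ ≤ (p / x) ^ N * μ := by
        apply mul_le_mul_of_nonneg_left (hSW n c)
          (pow_nonneg (div_nonneg hp0 (le_of_lt hx0)) _)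

lemma tsum_bound (c₀ : C) (p x μ : ℝ) (hp0 : 0 ≤ p) (hpx : p ≤ x) (hx0 : 0 < x) (hμ : 0 ≤ μ)
    (hSW : ∀ n, ∀ c : C, SW Φ hlf x c n ≤ μ) (M : ℕ) (hM : 1 ≤ M) :
    (∑' k : ℕ, ((TT Φ hlf c₀ (M + k)).card : ℝ≥0∞) * (ENNReal.ofReal p) ^ (M + k)) ≤
      ENNReal.ofReal ((p / x) ^ M * μ) := by
  rw [ENNReal.tsum_eq_iSup_sum]
  apply iSup_le
  intro s
  have heach : ∀ k ∈ s, ((TT Φ hlf c₀ (M + k)).card : ℝ≥0∞) * (ENNReal.ofReal p) ^ (M + k) =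
      ENNReal.ofReal (((TT Φ hlf c₀ (M + k)).card : ℝ) * p ^ (M + k)) := by
    intro k _
    rw [ENNReal.ofReal_mul (Nat.cast_nonneg _), ENNReal.ofReal_pow hp0, ENNReal.ofReal_natCast]
  rw [Finset.sum_congr rfl heach, ← ENNReal.ofReal_sum_of_nonneg
    (fun k _ => mul_nonneg (Nat.cast_nonneg _) (pow_nonneg hp0 _))]
  apply ENNReal.ofReal_le_ofReal
  have hinj : ∀ a ∈ s, ∀ b ∈ s, M + a = M + b → a = b := fun a _ b _ h => by omega
  calc ∑ k ∈ s, ((TT Φ hlf c₀ (M + k)).card : ℝ) * p ^ (M + k)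
      = ∑ j ∈ s.image (fun k => M + k), ((TT Φ hlf c₀ j).card : ℝ) * p ^ j :=
        (Finset.sum_image (g := fun k => M + k)
          (f := fun j => ((TT Φ hlf c₀ j).card : ℝ) * p ^ j) hinj).symm
    _ ≤ ∑ j ∈ Finset.Icc M (M + s.sup id), ((TT Φ hlf c₀ j).card : ℝ) * p ^ j := by
        apply Finset.sum_le_sum_of_subset_of_nonneg
        · intro j hj
          obtain ⟨k, hk, rfl⟩ := Finset.mem_image.1 hj
          have := Finset.le_sup (f := id) hk
          exact Finset.mem_Icc.2 ⟨by omega, by simp only [id] at this; omega⟩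
        · intro j _ _
          exact mul_nonneg (Nat.cast_nonneg _) (pow_nonneg hp0 _)
    _ ≤ (p / x) ^ M * μ := SW_tail x p μ hp0 hpx hx0 hμ hSW M hM c₀ _

end Counting

end MTdev
end MTdev3


/-- **Theorem (Moser–Tardos).** Under the LLL assumptions, for a random table `t` sampled from
the product space `(Λ^{V×ℕ}, P^{V×ℕ})`, for each `v ∈ V` the probability that every labeling
produced by the Moser–Tardos algorithm on `(Φ, t)` is defined at `v` equals `1`. -/
theorem moser_tardos
    {V Λ C : Type*} [MeasurableSpace Λ] [StandardBorelSpace Λ]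
    (Φ : CSP V Λ C) (P : Measure Λ) [IsProbabilityMeasure P]
    (p : ℝ) (d : ℕ) (hp0 : 0 ≤ p) (hp1 : p < 1)
    (hmeas : ∀ c, MeasurableSet (Φ.Bad c))
    (hbad : ∀ c, Φ.badProb P c ≤ ENNReal.ofReal p)
    (hdeg : ∀ c, (Φ.depGraph.neighborSet c).encard ≤ d)
    (hcrit : Real.exp 1 * p * (d + 1) < 1)
    (Q : Measure ((V × ℕ) → Λ)) (hQ : IsProductOf Q P)
    (v : V) :
    Q {t : (V × ℕ) → Λ |
        ∀ I : ℕ → Set C, Φ.Consistent (fun v n => t (v, n)) I → StabilizesAt Φ I v} = 1 := by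
  classical
  haveI : IsProbabilityMeasure Q := MTdev.isProb_of_isProductOf P Q hQ
  have hlf : ∀ c, (Φ.depGraph.neighborSet c).Finite := by
    intro c
    exact (Set.encard_le_coe_iff.1 (hdeg c)).1
  by_cases hvex : ∃ c : C, v ∈ Φ.dom c
  swap
  · have huniv : {t : (V × ℕ) → Λ |
        ∀ I : ℕ → Set C, Φ.Consistent (fun v n => t (v, n)) I → StabilizesAt Φ I v} =
        Set.univ := by
      apply Set.eq_univ_of_forall
      intro t I _
      refine ⟨0, fun n _ => ?_⟩
      have hzero : ∀ m, MTlev Φ I m v = 0 := by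
        intro m
        induction m with
        | zero => rfl
        | succ m ih =>
          have hno : ¬ ∃ c ∈ I m, v ∈ Φ.dom c := by
            rintro ⟨c, -, hc⟩
            exact hvex ⟨c, hc⟩
          simp [MTlev, hno, ih]
      rw [hzero n, hzero 0]
    rw [huniv]
    exact measure_univ
  obtain ⟨c₁, hc₁⟩ := hvex
  -- constants
  set E := Real.exp 1 with hE
  have hE2 : (2:ℝ) < E := lt_trans (by norm_num) Real.exp_one_gt_d9
  have hE0 : (0:ℝ) < E := Real.exp_pos 1
  have hd1 : (0:ℝ) < (d:ℝ) + 1 := by positivity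
  have hEd : (0:ℝ) < E * ((d:ℝ) + 1) := by positivity
  have hpβ : p < (E * ((d:ℝ) + 1))⁻¹ := by
    rw [← one_div, lt_div_iff₀ hEd]
    linear_combination hcrit
  set x := (p + (E * ((d:ℝ) + 1))⁻¹) / 2 with hxdef
  have hinv0 : (0:ℝ) < (E * ((d:ℝ) + 1))⁻¹ := inv_pos.2 hEd
  have hx0 : (0:ℝ) < x := by rw [hxdef]; linarith
  have hpx : p < x := by rw [hxdef]; linarith
  have hxβ : x < (E * ((d:ℝ) + 1))⁻¹ := by rw [hxdef]; linarith
  set Dn := max d 1 with hDn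
  set μ := ((Dn : ℕ) : ℝ)⁻¹ with hμdef
  have hDn0 : 0 < Dn := lt_of_lt_of_le one_pos (le_max_right d 1)
  have hμ0 : (0:ℝ) ≤ μ := by rw [hμdef]; positivity
  have hNbd : ∀ c : C, (MTdev.NbdF Φ hlf c).card ≤ d + 1 := by
    intro c
    have h1 : (MTdev.NbdF Φ hlf c).card ≤ (hlf c).toFinset.card + 1 :=
      Finset.card_insert_le _ _
    have h2 : (hlf c).toFinset.card ≤ d := by
      have henc := hdeg c
      rw [(hlf c).encard_eq_coe_toFinset_card] at henc
      exact_mod_cast henc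
    omega
  have hkey : x * (1 + μ) ^ (d + 1) ≤ μ := by
    rcases Nat.eq_zero_or_pos d with hd0 | hdpos
    · have hDn1 : Dn = 1 := by simp [hDn, hd0]
      have hxE : x < E⁻¹ := by
        have : (E * ((d:ℝ) + 1))⁻¹ = E⁻¹ := by rw [hd0]; norm_num
        rw [← this]
        exact hxβ
      have hE2' : E⁻¹ ≤ 2⁻¹ := by
        apply inv_anti₀ (by norm_num) (le_of_lt hE2)
      rw [hμdef, hDn1, hd0]
      norm_num
      linarith
    · have hDnd : Dn = d := max_eq_left hdpos
      have hdr : (0:ℝ) < (d:ℝ) := Nat.cast_pos.2 hdpos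
      rw [hμdef, hDnd]
      have h1d : 1 + ((d:ℝ))⁻¹ ≤ Real.exp ((d:ℝ)⁻¹) := by
        have := Real.add_one_le_exp ((d:ℝ)⁻¹)
        linarith
      have h2 : (1 + ((d:ℝ))⁻¹) ^ d ≤ E := by
        calc (1 + ((d:ℝ))⁻¹) ^ d ≤ (Real.exp ((d:ℝ)⁻¹)) ^ d :=
              pow_le_pow_left₀ (by positivity) h1d d
          _ = Real.exp ((d : ℕ) * ((d:ℝ))⁻¹) := (Real.exp_nat_mul _ d).symm
          _ = E := by rw [mul_inv_cancel₀ (ne_of_gt hdr), hE]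
      calc x * (1 + ((d:ℝ))⁻¹) ^ (d + 1)
          = x * ((1 + ((d:ℝ))⁻¹) ^ d * (1 + ((d:ℝ))⁻¹)) := by rw [pow_succ]
        _ ≤ x * (E * (1 + ((d:ℝ))⁻¹)) := by
            apply mul_le_mul_of_nonneg_left _ (le_of_lt hx0)
            exact mul_le_mul_of_nonneg_right h2 (by positivity)
        _ ≤ (E * ((d:ℝ) + 1))⁻¹ * (E * (1 + ((d:ℝ))⁻¹)) :=
            mul_le_mul_of_nonneg_right (le_of_lt hxβ) (by positivity)
        _ = ((d:ℝ))⁻¹ := by field_simp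
  have hSWle : ∀ n, ∀ c : C, MTdev.SW Φ hlf x c n ≤ μ :=
    MTdev.SW_le d hNbd x μ (le_of_lt hx0) hμ0 hkey
  -- the bad sets
  set KF := MTdev.NbdF Φ hlf c₁ with hKF
  set Bst : ℕ → Set ((V × ℕ) → Λ) := fun M =>
    ⋃ c₀ ∈ KF, ⋃ k : ℕ, ⋃ T ∈ MTdev.TT Φ hlf c₀ (M + k), MTdev.Ev Φ T with hBst
  have hBadMeas : ∀ M, MeasurableSet (Bst M) := by
    intro M
    apply MeasurableSet.biUnion (KF.countable_toSet)
    intro c₀ _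
    apply MeasurableSet.iUnion
    intro k
    apply MeasurableSet.biUnion ((MTdev.TT Φ hlf c₀ (M + k)).countable_toSet)
    intro T _
    exact MTdev.Ev_measurable Φ hmeas T
  have hBadLe : ∀ M, 1 ≤ M →
      Q (Bst M) ≤ ENNReal.ofReal (((d:ℝ) + 1) * ((p / x) ^ M * μ)) := by
    intro M hM
    calc Q (Bst M)
        ≤ ∑ c₀ ∈ KF, Q (⋃ k : ℕ, ⋃ T ∈ MTdev.TT Φ hlf c₀ (M + k), MTdev.Ev Φ T) :=
          measure_biUnion_finset_le _ _
      _ ≤ ∑ _c₀ ∈ KF, ENNReal.ofReal ((p / x) ^ M * μ) := by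
          apply Finset.sum_le_sum
          intro c₀ _
          calc Q (⋃ k : ℕ, ⋃ T ∈ MTdev.TT Φ hlf c₀ (M + k), MTdev.Ev Φ T)
              ≤ ∑' k : ℕ, Q (⋃ T ∈ MTdev.TT Φ hlf c₀ (M + k), MTdev.Ev Φ T) :=
                measure_iUnion_le _
            _ ≤ ∑' k : ℕ, ((MTdev.TT Φ hlf c₀ (M + k)).card : ℝ≥0∞) *
                  (ENNReal.ofReal p) ^ (M + k) := by
                apply ENNReal.tsum_le_tsum
                intro k
                calc Q (⋃ T ∈ MTdev.TT Φ hlf c₀ (M + k), MTdev.Ev Φ T)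
                    ≤ ∑ T ∈ MTdev.TT Φ hlf c₀ (M + k), Q (MTdev.Ev Φ T) :=
                      measure_biUnion_finset_le _ _
                  _ ≤ ∑ _T ∈ MTdev.TT Φ hlf c₀ (M + k), (ENNReal.ofReal p) ^ (M + k) := by
                      apply Finset.sum_le_sum
                      intro T hT
                      have hspec := MTdev.TT_spec hT
                      have hh := MTdev.Q_Ev_le Φ P Q hQ hmeas hbad hspec.1
                      rwa [hspec.2] at hh
                  _ = ((MTdev.TT Φ hlf c₀ (M + k)).card : ℝ≥0∞) *
                        (ENNReal.ofReal p) ^ (M + k) := by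
                      rw [Finset.sum_const, nsmul_eq_mul]
            _ ≤ ENNReal.ofReal ((p / x) ^ M * μ) :=
                MTdev.tsum_bound c₀ p x μ hp0 (le_of_lt hpx) hx0 hμ0 hSWle M hM
      _ ≤ ENNReal.ofReal (((d:ℝ) + 1) * ((p / x) ^ M * μ)) := by
          rw [Finset.sum_const, nsmul_eq_mul]
          have hKFd : (KF.card : ℝ≥0∞) ≤ ENNReal.ofReal ((d:ℝ) + 1) := by
            have h1 : KF.card ≤ d + 1 := hNbd c₁
            calc (KF.card : ℝ≥0∞) ≤ ((d + 1 : ℕ) : ℝ≥0∞) := by exact_mod_cast h1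
              _ = ENNReal.ofReal (((d + 1 : ℕ) : ℝ)) := (ENNReal.ofReal_natCast _).symm
              _ = ENNReal.ofReal ((d:ℝ) + 1) := by push_cast; ring_nf
          calc (KF.card : ℝ≥0∞) * ENNReal.ofReal ((p / x) ^ M * μ)
              ≤ ENNReal.ofReal ((d:ℝ) + 1) * ENNReal.ofReal ((p / x) ^ M * μ) :=
                mul_le_mul_left hKFd _
            _ = ENNReal.ofReal (((d:ℝ) + 1) * ((p / x) ^ M * μ)) :=
                (ENNReal.ofReal_mul (by positivity)).symm
  set Z := ⋂ M : ℕ, Bst (M + 1) with hZdef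
  have hZmeas : MeasurableSet Z := MeasurableSet.iInter (fun M => hBadMeas (M + 1))
  have hZ0 : Q Z = 0 := by
    have hle : ∀ M : ℕ, Q Z ≤ ENNReal.ofReal (((d:ℝ) + 1) * ((p / x) ^ (M + 1) * μ)) := by
      intro M
      exact le_trans (measure_mono (Set.iInter_subset _ M)) (hBadLe (M + 1) (by omega))
    have hten : Filter.Tendsto
        (fun M : ℕ => ENNReal.ofReal (((d:ℝ) + 1) * ((p / x) ^ (M + 1) * μ)))
        Filter.atTop (nhds 0) := by
      have hr0 : (0:ℝ) ≤ p / x := div_nonneg hp0 (le_of_lt hx0)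
      have hr1 : p / x < 1 := (div_lt_one hx0).2 hpx
      have h1 : Filter.Tendsto (fun M : ℕ => (p / x) ^ (M + 1)) Filter.atTop (nhds 0) :=
        (tendsto_pow_atTop_nhds_zero_of_lt_one hr0 hr1).comp
          (Filter.tendsto_add_atTop_nat 1)
      have h2 : Filter.Tendsto (fun M : ℕ => ((d:ℝ) + 1) * ((p / x) ^ (M + 1) * μ))
          Filter.atTop (nhds 0) := by
        have h3 := (h1.mul_const μ).const_mul ((d:ℝ) + 1)
        simpa using h3
      have h4 := ENNReal.tendsto_ofReal h2
      simpa using h4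
    exact le_antisymm (le_of_tendsto_of_tendsto' tendsto_const_nhds hten hle) (zero_le)
  have hsub : Zᶜ ⊆ {t : (V × ℕ) → Λ |
      ∀ I : ℕ → Set C, Φ.Consistent (fun v n => t (v, n)) I → StabilizesAt Φ I v} := by
    intro t ht
    rw [Set.mem_compl_iff, hZdef, Set.mem_iInter] at ht
    push_neg at ht
    obtain ⟨M, hM⟩ := ht
    intro I hcons
    by_contra hns
    obtain ⟨c₀, T, hvdom, hproper, hcard, hEv⟩ :=
      MTdev.witness_exists Φ hlf t I hcons v hns (M + 1)
    apply hM
    have hc₀KF : c₀ ∈ KF := by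
      rw [hKF]
      exact MTdev.mem_NbdF Φ hlf (MTdev.adjE_of_shared Φ hc₁ hvdom)
    have hTmem : T ∈ MTdev.TT Φ hlf c₀ ((M + 1) + (T.card - (M + 1))) := by
      have hmem := MTdev.mem_TT Φ hlf hproper
      rwa [show (M + 1) + (T.card - (M + 1)) = T.card from by omega]
    exact Set.mem_iUnion₂.2 ⟨c₀, hc₀KF,
      Set.mem_iUnion.2 ⟨T.card - (M + 1), Set.mem_iUnion₂.2 ⟨T, hTmem, hEv⟩⟩⟩
  have hgoal2 : (1 : ℝ≥0∞) ≤ Q {t : (V × ℕ) → Λ |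
      ∀ I : ℕ → Set C, Φ.Consistent (fun v n => t (v, n)) I → StabilizesAt Φ I v} := by
    have hmono := measure_mono (μ := Q) hsub
    rw [measure_compl hZmeas (measure_ne_top Q Z), hZ0, measure_univ, tsub_zero] at hmono
    exact hmono
  exact le_antisymm prob_le_one hgoal2
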